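/- Let k ≥ 1 be an integer, let τ_1 < τ_2 < … < τ_k be distinct real numbers, and let c_1, …, c_k be nonzero complex numbers. Define ψ(n) = Σ_{j=1}^{k} c_j n^{iτ_j} for positive integers n, where n^{iτ} = exp(iτ · log n). If ψ is multiplicative, i.e. ψ(1) = 1 and ψ(mn) = ψ(m) ψ(n) whenever gcd(m, n) = 1, then k = 1 and c_1 = 1. -/
import Mathlib


open Finset

lemma aux_exp_eq (s t L : ℝ)
    (h : Complex.exp (Complex.I * s * L) = Complex.exp (Complex.I * t * L)) :
    ∃ a : ℤ, (s - t) * L = 2 * Real.pi * a := by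
  have h1 : Complex.exp (Complex.I * s * L - Complex.I * t * L) = 1 := by
    rw [Complex.exp_sub, h, div_self (Complex.exp_ne_zero _)]
  rw [Complex.exp_eq_one_iff] at h1
  obtain ⟨a, ha⟩ := h1
  refine ⟨a, ?_⟩
  have key : (((s - t) * L : ℝ) : ℂ) * Complex.I
      = ((2 * Real.pi * a : ℝ) : ℂ) * Complex.I := by
    push_cast
    linear_combination ha
  have := mul_right_cancel₀ Complex.I_ne_zero key
  exact_mod_cast this

lemma aux_unique_prime {Δ : ℝ} (hΔ : Δ ≠ 0) {p q : ℕ} (hp : p.Prime) (hq : q.Prime)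
    {a b : ℤ} (ha : Δ * Real.log p = 2 * Real.pi * a)
    (hb : Δ * Real.log q = 2 * Real.pi * b) : p = q := by
  have hlp : (0:ℝ) < Real.log p := Real.log_pos (by exact_mod_cast hp.one_lt)
  have hlq : (0:ℝ) < Real.log q := Real.log_pos (by exact_mod_cast hq.one_lt)
  have hpi := Real.pi_pos
  have ha0 : a ≠ 0 := by
    rintro rfl
    simp only [Int.cast_zero, mul_zero] at ha
    exact (mul_ne_zero hΔ hlp.ne') ha
  have hb0 : b ≠ 0 := by
    rintro rfl
    simp only [Int.cast_zero, mul_zero] at hb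
    exact (mul_ne_zero hΔ hlq.ne') hb
  have key2 : (b:ℝ) * Real.log p = (a:ℝ) * Real.log q := by
    have key : Δ * ((b:ℝ) * Real.log p) = Δ * ((a:ℝ) * Real.log q) := by
      linear_combination (b:ℝ) * ha - (a:ℝ) * hb
    exact mul_left_cancel₀ hΔ key
  have habsb : |(b:ℝ)| = (b.natAbs : ℝ) := by rw [Nat.cast_natAbs, Int.cast_abs]
  have habsa : |(a:ℝ)| = (a.natAbs : ℝ) := by rw [Nat.cast_natAbs, Int.cast_abs]
  have habs : (b.natAbs : ℝ) * Real.log p = (a.natAbs : ℝ) * Real.log q := by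
    have := congrArg abs key2
    rwa [abs_mul, abs_mul, abs_of_pos hlp, abs_of_pos hlq, habsa, habsb] at this
  have hlogs : Real.log ((p:ℝ) ^ b.natAbs) = Real.log ((q:ℝ) ^ a.natAbs) := by
    rw [Real.log_pow, Real.log_pow]; exact_mod_cast habs
  have hp0 : (0:ℝ) < (p:ℝ) := by exact_mod_cast hp.pos
  have hq0 : (0:ℝ) < (q:ℝ) := by exact_mod_cast hq.pos
  have hppos : (0:ℝ) < (p:ℝ) ^ b.natAbs := by positivity
  have hqpos : (0:ℝ) < (q:ℝ) ^ a.natAbs := by positivity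
  have hpowR : (p:ℝ) ^ b.natAbs = (q:ℝ) ^ a.natAbs := by
    have := congrArg Real.exp hlogs
    rwa [Real.exp_log hppos, Real.exp_log hqpos] at this
  have hpow : p ^ b.natAbs = q ^ a.natAbs := by exact_mod_cast hpowR
  have hbn : b.natAbs ≠ 0 := Int.natAbs_ne_zero.mpr hb0
  have hdvd : p ∣ q ^ a.natAbs := hpow ▸ dvd_pow_self p hbn
  exact (Nat.prime_dvd_prime_iff_eq hp hq).mp (hp.dvd_of_dvd_pow hdvd)

lemma vand_zero {k : ℕ} {z w : Fin k → ℂ} (hz : Function.Injective z)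
    (h : ∀ t : ℕ, ∑ l, w l * z l ^ t = 0) : w = 0 := by
  have hdet : (Matrix.vandermonde z).det ≠ 0 :=
    Matrix.det_vandermonde_ne_zero_iff.mpr hz
  have hdet' : (Matrix.transpose (Matrix.vandermonde z)).det ≠ 0 := by
    rwa [Matrix.det_transpose]
  apply Matrix.eq_zero_of_mulVec_eq_zero hdet'
  funext t
  have := h (t : ℕ)
  simpa [Matrix.mulVec, Matrix.vandermonde, Matrix.transpose, dotProduct,
    mul_comm] using this

/-- Lemma on recovery from the one-parameter group: a nontrivial finite linear
combination of the functions `n ↦ n^{iτ}` with distinct frequencies and nonzero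
coefficients is multiplicative only when it is a single term `n ↦ n^{iτ₁}` with
coefficient `1`. -/
theorem stmt_19 :
    ∀ (k : ℕ), 1 ≤ k →
    ∀ (τ : Fin k → ℝ), StrictMono τ →
    ∀ (c : Fin k → ℂ), (∀ j, c j ≠ 0) →
    ∀ ψ : ℕ → ℂ,
      (∀ n : ℕ, 0 < n →
        ψ n = ∑ j, c j * Complex.exp (Complex.I * (τ j) * Real.log n)) →
      ψ 1 = 1 →
      (∀ m n : ℕ, 0 < m → 0 < n → Nat.Coprime m n → ψ (m * n) = ψ m * ψ n) →
      k = 1 ∧ ∀ j, c j = 1 := by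
  intro k hk τ hτ c hc ψ hψ h1 hmul
  have hS : ∑ j, c j = 1 := by
    have h := hψ 1 one_pos
    rw [h1] at h
    simpa using h.symm
  -- Main claim: for every positive n and every j, exp(I τ_j log n) = ψ n.
  have claim : ∀ n : ℕ, 0 < n → ∀ j,
      Complex.exp (Complex.I * τ j * Real.log n) = ψ n := by
    intro n hn
    -- find a good prime p not dividing n
    obtain ⟨p, hp, hpn, hgood⟩ : ∃ p : ℕ, p.Prime ∧ ¬ p ∣ n ∧
        ∀ l l' : Fin k, l ≠ l' →
          Complex.exp (Complex.I * τ l * Real.log p)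
            ≠ Complex.exp (Complex.I * τ l' * Real.log p) := by
      classical
      set Bad : Set ℕ := {p | p.Prime ∧ ∃ l l' : Fin k, l ≠ l' ∧
        Complex.exp (Complex.I * τ l * Real.log p)
          = Complex.exp (Complex.I * τ l' * Real.log p)} with hBad
      have hBadfin : Bad.Finite := by
        have hsub : Bad ⊆ ⋃ (q : Fin k × Fin k),
            {p | p.Prime ∧ q.1 ≠ q.2 ∧
              Complex.exp (Complex.I * τ q.1 * Real.log p)
                = Complex.exp (Complex.I * τ q.2 * Real.log p)} := by
          rintro p ⟨hp, l, l', hll, he⟩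
          exact Set.mem_iUnion.mpr ⟨(l, l'), hp, hll, he⟩
        refine Set.Finite.subset (Set.finite_iUnion fun q => ?_) hsub
        rcases eq_or_ne q.1 q.2 with hq | hq
        · convert Set.finite_empty using 1
          ext p; simp [hq]
        · apply Set.Subsingleton.finite
          rintro p ⟨hp, -, hep⟩ p' ⟨hp', -, hep'⟩
          have hΔ : τ q.1 - τ q.2 ≠ 0 :=
            sub_ne_zero.mpr (fun h => hq (hτ.injective h))
          obtain ⟨a, ha⟩ := aux_exp_eq _ _ _ hep
          obtain ⟨b, hb⟩ := aux_exp_eq _ _ _ hep'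
          exact aux_unique_prime hΔ hp hp' ha hb
      have hdvdfin : {p : ℕ | p ∣ n}.Finite := by
        refine Set.Finite.subset (Set.finite_Iic n) fun p hp => ?_
        exact Nat.le_of_dvd hn hp
      have hinf : ({p : ℕ | p.Prime} \ (Bad ∪ {p | p ∣ n})).Infinite :=
        Nat.infinite_setOf_prime.diff (hBadfin.union hdvdfin)
      obtain ⟨p, hpmem⟩ := hinf.nonempty
      obtain ⟨hp, hnot⟩ := hpmem
      rw [Set.mem_union] at hnot
      push_neg at hnot
      refine ⟨p, hp, hnot.2, ?_⟩
      intro l l' hll he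
      exact hnot.1 ⟨hp, l, l', hll, he⟩
    -- set up Vandermonde data
    set z : Fin k → ℂ := fun l => Complex.exp (Complex.I * τ l * Real.log p) with hzdef
    have hz : Function.Injective z := by
      intro l l' h
      by_contra hne
      exact hgood l l' hne h
    set w : Fin k → ℂ := fun l =>
      c l * Complex.exp (Complex.I * τ l * Real.log n) - ψ n * c l with hwdef
    have hw : ∀ t : ℕ, ∑ l, w l * z l ^ t = 0 := by
      intro t
      have hcop : Nat.Coprime (p ^ t) n :=
        Nat.Coprime.pow_left t ((hp.coprime_iff_not_dvd).mpr hpn)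
      have hppos : 0 < p ^ t := pow_pos hp.pos t
      have hm := hmul (p ^ t) n hppos hn hcop
      rw [hψ (p ^ t * n) (Nat.mul_pos hppos hn), hψ (p ^ t) hppos] at hm
      have hterm : ∀ l : Fin k,
          Complex.exp (Complex.I * τ l * Real.log ((p ^ t * n : ℕ) : ℝ))
            = z l ^ t * Complex.exp (Complex.I * τ l * Real.log n) := by
        intro l
        have hppow0 : ((p : ℝ) ^ t) ≠ 0 := by
          have : (0:ℝ) < (p:ℝ) := by exact_mod_cast hp.pos
          positivity
        have hlog : Real.log ((p ^ t * n : ℕ) : ℝ)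
            = t * Real.log p + Real.log n := by
          push_cast
          rw [Real.log_mul hppow0 (by exact_mod_cast hn.ne'), Real.log_pow]
        have harg : Complex.I * (τ l : ℂ) * ((Real.log ((p ^ t * n : ℕ) : ℝ) : ℝ) : ℂ)
            = (t : ℂ) * (Complex.I * τ l * Real.log p)
              + Complex.I * τ l * Real.log n := by
          rw [hlog]; push_cast; ring
        rw [harg, Complex.exp_add, Complex.exp_nat_mul]
      have hterm2 : ∀ l : Fin k,
          Complex.exp (Complex.I * τ l * Real.log ((p ^ t : ℕ) : ℝ)) = z l ^ t := by
        intro l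
        have hlog : Real.log ((p ^ t : ℕ) : ℝ) = t * Real.log p := by
          push_cast; rw [Real.log_pow]
        have harg : Complex.I * (τ l : ℂ) * ((Real.log ((p ^ t : ℕ) : ℝ) : ℝ) : ℂ)
            = (t : ℂ) * (Complex.I * τ l * Real.log p) := by
          rw [hlog]; push_cast; ring
        rw [harg, Complex.exp_nat_mul]
      calc ∑ l, w l * z l ^ t
          = (∑ l, c l * Complex.exp (Complex.I * τ l
              * Real.log ((p ^ t * n : ℕ) : ℝ)))
            - (∑ l, c l * Complex.exp (Complex.I * τ l
              * Real.log ((p ^ t : ℕ) : ℝ))) * ψ n := by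
            rw [Finset.sum_mul, ← Finset.sum_sub_distrib]
            refine Finset.sum_congr rfl fun l _ => ?_
            rw [hterm l, hterm2 l]
            simp only [hwdef]
            ring
        _ = 0 := by rw [hm]; ring
    have hw0 := vand_zero hz hw
    intro j
    have hj : w j = 0 := congrFun hw0 j
    simp only [hwdef] at hj
    have : c j * Complex.exp (Complex.I * τ j * Real.log n) = c j * ψ n := by
      linear_combination hj
    exact mul_left_cancel₀ (hc j) this
  -- k = 1
  have hk1 : k = 1 := by
    by_contra hne
    have hk2 : 2 ≤ k := by omega
    set j0 : Fin k := ⟨0, by omega⟩ with hj0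
    set j1 : Fin k := ⟨1, by omega⟩ with hj1
    have hΔ : τ j1 - τ j0 ≠ 0 := by
      have : τ j0 < τ j1 := hτ (by simp [hj0, hj1, Fin.lt_def])
      exact sub_ne_zero.mpr this.ne'
    have c2 := claim 2 (by norm_num)
    have c3 := claim 3 (by norm_num)
    obtain ⟨a, ha⟩ := aux_exp_eq (τ j1) (τ j0) (Real.log ((2:ℕ):ℝ))
      (by rw [c2 j1, c2 j0])
    obtain ⟨b, hb⟩ := aux_exp_eq (τ j1) (τ j0) (Real.log ((3:ℕ):ℝ))
      (by rw [c3 j1, c3 j0])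
    have : (2:ℕ) = 3 := aux_unique_prime hΔ Nat.prime_two Nat.prime_three ha hb
    norm_num at this
  subst hk1
  refine ⟨rfl, fun j => ?_⟩
  have hj : j = 0 := Subsingleton.elim j 0
  rw [Fin.sum_univ_one] at hS
  rw [hj, hS]
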